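/- Let (α, μ) be a measure space and let H = L²(μ; ℝ). Let V be a closed subspace of H and let P denote the orthogonal projection of H onto V. Let ψ : α → ℝ be measurable with |ψ(x)| ≤ 1 for μ-almost every x, and let g, h ∈ H be such that the pointwise product ψ·h belongs to V. Then ‖ψ·g − P(ψ·g)‖_{L²} ≤ ‖g + h‖_{L²}. (This is the key estimate in the paper's appendix showing ‖ψ_a f − Π(ψ_a f)‖_T ≤ ‖f + Δu_ℓ‖_T, with P the L²-orthogonal projection onto piecewise polynomials.) -/

import Mathlib

open MeasureTheory

/-- If `|ψ| ≤ 1` a.e. and `ψ·h` lies in the closed subspace `V` of `L²`, then the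
distance of `ψ·g` to `V` is bounded by `‖g + h‖`. -/
theorem stmt_10 {α : Type*} [MeasurableSpace α] (μ : Measure α)
    (V : Submodule ℝ (Lp ℝ 2 μ)) [CompleteSpace V]
    (ψ : α → ℝ) (hψm : Measurable ψ) (hψ : ∀ᵐ x ∂μ, |ψ x| ≤ 1)
    (g h : Lp ℝ 2 μ)
    (hg : MemLp (fun x => ψ x * g x) 2 μ)
    (hh : MemLp (fun x => ψ x * h x) 2 μ)
    (hhV : hh.toLp ∈ V) :
    ‖hg.toLp - (Submodule.orthogonalProjectionOnto V hg.toLp : Lp ℝ 2 μ)‖ ≤ ‖g + h‖ := by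
  have key : ‖hg.toLp - (Submodule.orthogonalProjectionOnto V hg.toLp : Lp ℝ 2 μ)‖
      ≤ ‖hg.toLp - ((-⟨hh.toLp, hhV⟩ : V) : Lp ℝ 2 μ)‖ := by
    rw [show ((Submodule.orthogonalProjectionOnto V hg.toLp : V) : Lp ℝ 2 μ) = V.starProjection hg.toLp from rfl, Submodule.starProjection_minimal]
    exact ciInf_le ⟨0, fun x ⟨w, hw⟩ => hw ▸ norm_nonneg _⟩ _
  refine key.trans ?_
  have h1 : hg.toLp - ((-⟨hh.toLp, hhV⟩ : V) : Lp ℝ 2 μ) = hg.toLp + hh.toLp := by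
    push_cast
    exact sub_neg_eq_add _ _
  rw [h1, ← MemLp.toLp_add hg hh]
  rw [Lp.norm_toLp, Lp.norm_def]
  have hgh : (↑(g + h) : α → ℝ) =ᵐ[μ] fun x => g x + h x := Lp.coeFn_add g h
  calc (eLpNorm (fun x => ψ x * g x + ψ x * h x) 2 μ).toReal
      ≤ (eLpNorm (fun x => g x + h x) 2 μ).toReal := by
        refine ENNReal.toReal_mono ?_ ?_
        · exact ((Lp.memLp (g + h)).ae_eq hgh).2.ne
        · refine eLpNorm_mono_ae (hψ.mono fun x hx => ?_)
          have : ψ x * g x + ψ x * h x = ψ x * (g x + h x) := by ring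
          rw [this, norm_mul]
          calc ‖ψ x‖ * ‖g x + h x‖ ≤ 1 * ‖g x + h x‖ := by
                exact mul_le_mul_of_nonneg_right hx (norm_nonneg _)
            _ = ‖g x + h x‖ := one_mul _
    _ = (eLpNorm (↑(g + h) : α → ℝ) 2 μ).toReal := by
        rw [eLpNorm_congr_ae hgh]
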